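/- Let f ∈ C(∂Ω) and h : ∂Ω → [-∞,∞] with h = 0 quasieverywhere on ∂Ω. Suppose that for every Lipschitz function g on the closure of Ω, both g and g + h are resolutive and P(g+h) = Pg. Then f and f + h are resolutive and P(f+h) = Pf. -/

import Mathlib

open Set Filter Topology

variable {n : ℕ}
theorem lip_approx {E : Type*} [MetricSpace E] {K : Set E} (hK : IsCompact K)
    {f : E → ℝ} (hf : ContinuousOn f K) {ε : ℝ} (hε : 0 < ε) :
    ∃ g : E → ℝ, (∃ L : NNReal, LipschitzWith L g) ∧ ∀ x ∈ K, |f x - g x| ≤ ε := by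
  rcases K.eq_empty_or_nonempty with hKe | hKne
  · exact ⟨fun _ => 0, ⟨0, LipschitzWith.const 0⟩, by simp [hKe]⟩
  haveI : Nonempty K := hKne.to_subtype
  obtain ⟨M, hM⟩ := hK.exists_bound_of_continuousOn hf
  have hM0 : 0 ≤ M := le_trans (norm_nonneg _) (hM hKne.some hKne.some_mem)
  have hMa : ∀ y ∈ K, |f y| ≤ M := fun y hy => by
    simpa [Real.norm_eq_abs] using hM y hy
  have huc := (hK.uniformContinuousOn_of_continuous hf)
  rw [Metric.uniformContinuousOn_iff] at huc
  obtain ⟨δ, hδ, hδf⟩ := huc ε hε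
  set c : ℝ := 2 * M / δ with hc
  have hc0 : 0 ≤ c := div_nonneg (by linarith) hδ.le
  set g : E → ℝ := fun x => ⨅ y : K, (f y + c * dist x y) with hg
  have bdd : ∀ x : E, BddBelow (Set.range fun y : K => f y + c * dist x y) := by
    intro x
    refine ⟨-M, ?_⟩
    rintro t ⟨y, rfl⟩
    have h1 := (abs_le.1 (hMa y y.2)).1
    have h2 : 0 ≤ c * dist x (y : E) := mul_nonneg hc0 dist_nonneg
    dsimp only
    linarith
  have key : ∀ x x' : E, g x ≤ g x' + c * dist x x' := by
    intro x x'
    have : g x - c * dist x x' ≤ g x' := by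
      refine le_ciInf fun y => ?_
      have h1 : g x ≤ f y + c * dist x (y : E) := ciInf_le (bdd x) y
      have h2 : dist x (y : E) ≤ dist x x' + dist x' (y : E) := dist_triangle _ _ _
      nlinarith
    linarith
  refine ⟨g, ⟨⟨c, hc0⟩, ?_⟩, ?_⟩
  · refine LipschitzWith.of_dist_le_mul fun x y => ?_
    rw [Real.dist_eq, abs_sub_le_iff]
    constructor
    · have := key x y; show g x - g y ≤ c * dist x y; linarith
    · have := key y x; rw [dist_comm]; show g y - g x ≤ c * dist y x; linarith
  · intro x hx
    rw [abs_sub_le_iff]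
    constructor
    · -- f x - g x ≤ ε : g x ≥ f x - ε
      have : f x - ε ≤ g x := by
        refine le_ciInf fun y => ?_
        rcases le_or_gt δ (dist x (y : E)) with hd | hd
        · have h1 := (abs_le.1 (hMa x hx)).2
          have h2 := (abs_le.1 (hMa y y.2)).1
          have h3 : 2 * M ≤ c * dist x (y : E) := by
            rw [hc]
            rw [div_mul_eq_mul_div, le_div_iff₀ hδ]
            nlinarith
          linarith
        · have h1 := hδf x hx y y.2 hd
          rw [Real.dist_eq, abs_lt] at h1
          have h2 : 0 ≤ c * dist x (y : E) := mul_nonneg hc0 dist_nonneg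
          linarith
      linarith
    · -- g x - f x ≤ ε : g x ≤ f x
      have : g x ≤ f x := by
        have := ciInf_le (bdd x) (⟨x, hx⟩ : K)
        simpa using this
      linarith

theorem ereal_sandwich {a b : ℝ} {z : EReal} (h1 : (a:EReal) ≤ z) (h2 : z ≤ (b:EReal)) :
    z = ((z.toReal : ℝ) : EReal) ∧ a ≤ z.toReal ∧ z.toReal ≤ b := by
  have hzt : z ≠ ⊤ := (lt_of_le_of_lt h2 (EReal.coe_lt_top b)).ne
  have hzb : z ≠ ⊥ := (lt_of_lt_of_le (EReal.bot_lt_coe a) h1).ne'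
  have hz := EReal.coe_toReal hzt hzb
  refine ⟨hz.symm, ?_, ?_⟩
  · rw [← EReal.coe_le_coe_iff, hz]; exact h1
  · rw [← EReal.coe_le_coe_iff, hz]; exact h2


/-- `f` is resolutive with respect to the upper and lower Perron operators
`uP`, `lP`: they agree in `Ω` and the common value is `A`-harmonic there. -/
def ResolutiveOp (Ω : Set (EuclideanSpace ℝ (Fin n)))
    (uP lP : (EuclideanSpace ℝ (Fin n) → EReal) → EuclideanSpace ℝ (Fin n) → EReal)
    (AHarm : (EuclideanSpace ℝ (Fin n) → ℝ) → Prop)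
    (f : EuclideanSpace ℝ (Fin n) → EReal) : Prop :=
  (∀ x ∈ Ω, uP f x = lP f x) ∧
  ∃ v : EuclideanSpace ℝ (Fin n) → ℝ, AHarm v ∧ ∀ x ∈ Ω, uP f x = (v x : EReal)

/-- Theorem 3.8 (reduction from Lipschitz to continuous data): let `f ∈ C(∂Ω)`
and `h = 0` q.e. on `∂Ω`. If every Lipschitz function `g` on `closure Ω`
satisfies that `g` and `g + h` are resolutive with `P(g+h) = Pg`, then `f` and
`f + h` are resolutive and `P(f+h) = Pf`. The Perron operators are assumed
monotone, translate-by-constant compatible, comparable (`ŝP ≤ P̄`), and a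
uniform limit of `A`-harmonic functions is `A`-harmonic. -/
theorem stmt_5 (Ω : Set (EuclideanSpace ℝ (Fin n)))
    (hΩo : IsOpen Ω) (hΩb : Bornology.IsBounded Ω) (hΩne : Ω.Nonempty)
    (uP lP : (EuclideanSpace ℝ (Fin n) → EReal) → EuclideanSpace ℝ (Fin n) → EReal)
    (AHarm : (EuclideanSpace ℝ (Fin n) → ℝ) → Prop)
    (Cpw : Set (EuclideanSpace ℝ (Fin n)) → ENNReal)
    -- monotonicity of the Perron operators in the boundary data
    (humono : ∀ f g : EuclideanSpace ℝ (Fin n) → EReal,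
      (∀ x ∈ frontier Ω, f x ≤ g x) → ∀ x ∈ Ω, uP f x ≤ uP g x)
    (hlmono : ∀ f g : EuclideanSpace ℝ (Fin n) → EReal,
      (∀ x ∈ frontier Ω, f x ≤ g x) → ∀ x ∈ Ω, lP f x ≤ lP g x)
    -- translation by real constants
    (huconst : ∀ (f : EuclideanSpace ℝ (Fin n) → EReal) (c : ℝ) (x : EuclideanSpace ℝ (Fin n)),
      uP (fun y => f y + (c : EReal)) x = uP f x + (c : EReal))
    (hlconst : ∀ (f : EuclideanSpace ℝ (Fin n) → EReal) (c : ℝ) (x : EuclideanSpace ℝ (Fin n)),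
      lP (fun y => f y + (c : EReal)) x = lP f x + (c : EReal))
    -- comparison principle
    (hcomp : ∀ (f : EuclideanSpace ℝ (Fin n) → EReal) (x : EuclideanSpace ℝ (Fin n)),
      x ∈ Ω → lP f x ≤ uP f x)
    -- a uniform limit on Ω of A-harmonic functions is A-harmonic
    (hAHunif : ∀ (v : ℕ → EuclideanSpace ℝ (Fin n) → ℝ) (vlim : EuclideanSpace ℝ (Fin n) → ℝ),
      (∀ k, AHarm (v k)) → TendstoUniformlyOn (fun k x => v k x) vlim atTop Ω → AHarm vlim)
    (f : EuclideanSpace ℝ (Fin n) → ℝ) (hf : ContinuousOn f (frontier Ω))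
    (h : EuclideanSpace ℝ (Fin n) → EReal)
    (hqe : Cpw {x ∈ frontier Ω | h x ≠ 0} = 0)
    -- hypothesis: the result for Lipschitz boundary data
    (hLip : ∀ g : EuclideanSpace ℝ (Fin n) → ℝ,
      (∃ K : NNReal, LipschitzOnWith K g (closure Ω)) →
      ResolutiveOp Ω uP lP AHarm (fun x => (g x : EReal)) ∧
      ResolutiveOp Ω uP lP AHarm (fun x => (g x : EReal) + h x) ∧
      ∀ x ∈ Ω, uP (fun y => (g y : EReal) + h y) x = uP (fun y => (g y : EReal)) x) :
    ResolutiveOp Ω uP lP AHarm (fun x => (f x : EReal)) ∧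
    ResolutiveOp Ω uP lP AHarm (fun x => (f x : EReal) + h x) ∧
    ∀ x ∈ Ω, uP (fun y => (f y : EReal) + h y) x = uP (fun y => (f y : EReal)) x := by
  classical
  set K : Set (EuclideanSpace ℝ (Fin n)) := frontier Ω with hKdef
  have hKc : IsCompact K := Metric.isCompact_of_isClosed_isBounded isClosed_frontier
    (hΩb.closure.subset (frontier_subset_closure))
  set e : ℕ → ℝ := fun k => ((k : ℝ) + 1)⁻¹ with he_def
  have he : ∀ k, 0 < e k := fun k => by positivity
  have het : Tendsto e atTop (𝓝 0) := by
    have : Tendsto (fun n : ℕ => 1 / ((n : ℝ) + 1)) atTop (𝓝 0) := tendsto_one_div_add_atTop_nhds_zero_nat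
    simpa [he_def, one_div] using this
  choose g hgLip hgc using fun k : ℕ => lip_approx hKc hf (he k)
  have hGL : ∀ k, ∃ L : NNReal, LipschitzOnWith L (g k) (closure Ω) := fun k =>
    (hgLip k).imp fun L hL => hL.lipschitzOnWith (s := closure Ω)
  have H := fun k => hLip (g k) (hGL k)
  choose v hvA hveq using fun k : ℕ => (H k).1.2
  set fc : EuclideanSpace ℝ (Fin n) → EReal := fun y => (f y : EReal) with hfc
  set fch : EuclideanSpace ℝ (Fin n) → EReal := fun y => (f y : EReal) + h y with hfch
  -- boundary inequalities
  have hbd1 : ∀ k, ∀ y ∈ K, f y ≤ g k y + e k := fun k y hy => by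
    have := (abs_sub_le_iff.1 (hgc k y hy)).1; linarith
  have hbd2 : ∀ k, ∀ y ∈ K, g k y - e k ≤ f y := fun k y hy => by
    have := (abs_sub_le_iff.1 (hgc k y hy)).2; linarith
  -- the four sandwich inequalities
  have hub1 : ∀ k, ∀ x ∈ Ω, uP fc x ≤ ((v k x + e k : ℝ) : EReal) := by
    intro k x hx
    have h2 := humono fc (fun y => ((g k y + e k : ℝ) : EReal))
      (fun y hy => EReal.coe_le_coe_iff.mpr (hbd1 k y hy)) x hx
    have h3 : (fun y => ((g k y + e k : ℝ) : EReal))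
        = fun y => ((g k y : EReal) + ((e k : ℝ) : EReal)) :=
      funext fun y => EReal.coe_add _ _
    rw [h3, huconst (fun y => ((g k y : ℝ) : EReal)) (e k) x, hveq k x hx,
      ← EReal.coe_add] at h2
    exact h2
  have hlb1 : ∀ k, ∀ x ∈ Ω, ((v k x - e k : ℝ) : EReal) ≤ lP fc x := by
    intro k x hx
    have h2 := hlmono (fun y => ((g k y - e k : ℝ) : EReal)) fc
      (fun y hy => EReal.coe_le_coe_iff.mpr (hbd2 k y hy)) x hx
    have h3 : (fun y => ((g k y - e k : ℝ) : EReal))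
        = fun y => ((g k y : EReal) + ((-(e k) : ℝ) : EReal)) :=
      funext fun y => by rw [sub_eq_add_neg, EReal.coe_add]
    rw [h3, hlconst (fun y => ((g k y : ℝ) : EReal)) (-(e k)) x,
      ← (H k).1.1 x hx, hveq k x hx, ← EReal.coe_add] at h2
    rw [sub_eq_add_neg]
    exact h2
  have hub2 : ∀ k, ∀ x ∈ Ω, uP fch x ≤ ((v k x + e k : ℝ) : EReal) := by
    intro k x hx
    have h2 := humono fch (fun y => ((g k y + e k : ℝ) : EReal) + h y)
      (fun y hy => add_le_add_left (EReal.coe_le_coe_iff.mpr (hbd1 k y hy)) _) x hx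
    have h3 : (fun y => ((g k y + e k : ℝ) : EReal) + h y)
        = fun y => ((g k y : EReal) + h y) + ((e k : ℝ) : EReal) :=
      funext fun y => by rw [EReal.coe_add]; exact add_right_comm _ _ _
    rw [h3, huconst (fun y => ((g k y : ℝ) : EReal) + h y) (e k) x,
      (H k).2.2 x hx, hveq k x hx, ← EReal.coe_add] at h2
    exact h2
  have hlb2 : ∀ k, ∀ x ∈ Ω, ((v k x - e k : ℝ) : EReal) ≤ lP fch x := by
    intro k x hx
    have h2 := hlmono (fun y => ((g k y - e k : ℝ) : EReal) + h y) fch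
      (fun y hy => add_le_add_left (EReal.coe_le_coe_iff.mpr (hbd2 k y hy)) _) x hx
    have h3 : (fun y => ((g k y - e k : ℝ) : EReal) + h y)
        = fun y => ((g k y : EReal) + h y) + ((-(e k) : ℝ) : EReal) :=
      funext fun y => by rw [sub_eq_add_neg, EReal.coe_add]; exact add_right_comm _ _ _
    rw [h3, hlconst (fun y => ((g k y : ℝ) : EReal) + h y) (-(e k)) x,
      ← (H k).2.1.1 x hx, (H k).2.2 x hx, hveq k x hx, ← EReal.coe_add] at h2
    rw [sub_eq_add_neg]
    exact h2
  -- from the sandwiches: all four quantities are finite and close to v k x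
  set V : EuclideanSpace ℝ (Fin n) → ℝ := fun x => (uP fc x).toReal with hVdef
  -- helper: extract finiteness and closeness
  have hkey : ∀ x ∈ Ω, ∀ (z : EReal),
      (∀ k, ((v k x - e k : ℝ) : EReal) ≤ z ∧ z ≤ ((v k x + e k : ℝ) : EReal)) →
      z = ((z.toReal : ℝ) : EReal) ∧ ∀ k, |z.toReal - v k x| ≤ e k := by
    intro x _ z hz
    obtain ⟨hz0, hz1, hz2⟩ := ereal_sandwich (hz 0).1 (hz 0).2
    refine ⟨hz0, fun k => ?_⟩
    obtain ⟨_, ha, hb⟩ := ereal_sandwich (hz k).1 (hz k).2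
    rw [abs_sub_le_iff]
    constructor <;> linarith
  have huf : ∀ x ∈ Ω, ∀ k, ((v k x - e k : ℝ) : EReal) ≤ uP fc x ∧
      uP fc x ≤ ((v k x + e k : ℝ) : EReal) := fun x hx k =>
    ⟨le_trans (hlb1 k x hx) (hcomp fc x hx), hub1 k x hx⟩
  have hlf : ∀ x ∈ Ω, ∀ k, ((v k x - e k : ℝ) : EReal) ≤ lP fc x ∧
      lP fc x ≤ ((v k x + e k : ℝ) : EReal) := fun x hx k =>
    ⟨hlb1 k x hx, le_trans (hcomp fc x hx) (hub1 k x hx)⟩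
  have hufh : ∀ x ∈ Ω, ∀ k, ((v k x - e k : ℝ) : EReal) ≤ uP fch x ∧
      uP fch x ≤ ((v k x + e k : ℝ) : EReal) := fun x hx k =>
    ⟨le_trans (hlb2 k x hx) (hcomp fch x hx), hub2 k x hx⟩
  have hlfh : ∀ x ∈ Ω, ∀ k, ((v k x - e k : ℝ) : EReal) ≤ lP fch x ∧
      lP fch x ≤ ((v k x + e k : ℝ) : EReal) := fun x hx k =>
    ⟨hlb2 k x hx, le_trans (hcomp fch x hx) (hub2 k x hx)⟩
  -- two reals within e k of the same v k x for all k are equal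
  have eqr : ∀ A B : ℝ, ∀ x, (∀ k, |A - v k x| ≤ e k) → (∀ k, |B - v k x| ≤ e k) → A = B := by
    intro A B x hA hB
    have h1 : |A - B| ≤ 0 := by
      have hlim : Tendsto (fun k : ℕ => 2 * e k) atTop (𝓝 (2 * 0)) := het.const_mul 2
      rw [mul_zero] at hlim
      refine ge_of_tendsto' hlim fun k => ?_
      calc |A - B| ≤ |A - v k x| + |v k x - B| := abs_sub_le _ _ _
          _ ≤ e k + e k := add_le_add (hA k) (by rw [abs_sub_comm]; exact hB k)
          _ = 2 * e k := by ring
    have := abs_nonneg (A - B)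
    have : |A - B| = 0 := le_antisymm h1 this
    exact sub_eq_zero.1 (abs_eq_zero.1 this)
  -- the four toReal values agree with V on Ω, and equal as EReal
  have hVeq : ∀ x ∈ Ω, uP fc x = ((V x : ℝ) : EReal) ∧ (∀ k, |V x - v k x| ≤ e k) :=
    fun x hx => hkey x hx _ (huf x hx)
  have hmain : ∀ x ∈ Ω, lP fc x = ((V x : ℝ) : EReal) ∧ uP fch x = ((V x : ℝ) : EReal) ∧
      lP fch x = ((V x : ℝ) : EReal) := by
    intro x hx
    obtain ⟨hl0, hl1⟩ := hkey x hx _ (hlf x hx)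
    obtain ⟨hu0, hu1⟩ := hkey x hx _ (hufh x hx)
    obtain ⟨hh0, hh1⟩ := hkey x hx _ (hlfh x hx)
    obtain ⟨_, hV1⟩ := hVeq x hx
    refine ⟨?_, ?_, ?_⟩
    · rw [hl0, eqr _ _ x hl1 hV1]
    · rw [hu0, eqr _ _ x hu1 hV1]
    · rw [hh0, eqr _ _ x hh1 hV1]
  -- V is A-harmonic as a uniform limit of the v k
  have hVA : AHarm V := by
    refine hAHunif v V hvA ?_
    rw [Metric.tendstoUniformlyOn_iff]
    intro ε hε
    filter_upwards [het.eventually (gt_mem_nhds hε)] with k hk x hx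
    rw [Real.dist_eq]
    exact lt_of_le_of_lt ((hVeq x hx).2 k) hk
  refine ⟨⟨fun x hx => ?_, V, hVA, fun x hx => (hVeq x hx).1⟩,
    ⟨fun x hx => ?_, V, hVA, fun x hx => (hmain x hx).2.1⟩, fun x hx => ?_⟩
  · rw [(hVeq x hx).1, (hmain x hx).1]
  · rw [(hmain x hx).2.1, (hmain x hx).2.2.symm]
  · rw [(hmain x hx).2.1, (hVeq x hx).1]
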